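/- Let L be a finite sublattice of the Boolean lattice of subsets of {1,...,n}, containing ∅ and {1,...,n}. Let p, q ∈ L be such that the interval [⋀N(q), q] is contained in the interval [⋀N(p), p] and both intervals are Boolean lattices. Then |q| - |N(q)| - |⋀N(q)| ≤ |p| - |N(p)| - |⋀N(p)|, where |·| denotes cardinality of the corresponding subset of {1,...,n}. -/

import Mathlib

/-- `q` is covered by `p` inside the finite sublattice `L` of the Boolean lattice. -/
def CoversIn {n : ℕ} (L : Finset (Finset (Fin n))) (q p : Finset (Fin n)) : Prop :=
  q ∈ L ∧ p ∈ L ∧ q ⊂ p ∧ ∀ r ∈ L, q ⊂ r → r ⊂ p → False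

/-- Meet (intersection) of the members of `S`, empty meet taken to be `p`. -/
def meetF {n : ℕ} (p : Finset (Fin n)) (S : Finset (Finset (Fin n))) : Finset (Fin n) :=
  (insert p S).inf id

/-- The interval `[a, b]` of the sublattice `L` is a Boolean lattice, i.e.
order-isomorphic to the lattice of subsets of a finite set. -/
def IsBooleanIntervalIn {n : ℕ} (L : Finset (Finset (Fin n))) (a b : Finset (Fin n)) : Prop :=
  ∃ k : ℕ, Nonempty ({r : Finset (Fin n) // r ∈ L ∧ a ⊆ r ∧ r ⊆ b} ≃o Finset (Fin k))

/-- Let `L` be a finite sublattice of the Boolean lattice on `{1,...,n}`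
containing `∅` and `{1,...,n}`, and `p, q ∈ L` with `[⋀N(q), q] ⊆ [⋀N(p), p]`, both
intervals being Boolean. Then `|q| - |N(q)| - |⋀N(q)| ≤ |p| - |N(p)| - |⋀N(p)|`. -/
theorem stmt7 {n : ℕ} (L : Finset (Finset (Fin n)))
    (hLmeet : ∀ a ∈ L, ∀ b ∈ L, a ∩ b ∈ L) (hLjoin : ∀ a ∈ L, ∀ b ∈ L, a ∪ b ∈ L)
    (hbot : ∅ ∈ L) (htop : Finset.univ ∈ L)
    (p q : Finset (Fin n)) (hp : p ∈ L) (hq : q ∈ L)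
    (Np Nq : Finset (Finset (Fin n)))
    (hNp : ∀ r, r ∈ Np ↔ CoversIn L r p) (hNq : ∀ r, r ∈ Nq ↔ CoversIn L r q)
    (hsub₁ : meetF p Np ⊆ meetF q Nq) (hsub₂ : q ⊆ p)
    (hBp : IsBooleanIntervalIn L (meetF p Np) p)
    (hBq : IsBooleanIntervalIn L (meetF q Nq) q) :
    (q.card : ℤ) - Nq.card - (meetF q Nq).card ≤ (p.card : ℤ) - Np.card - (meetF p Np).card := by
  classical
  obtain ⟨k, ⟨e⟩⟩ := hBp
  have hinfL : ∀ S : Finset (Finset (Fin n)), (∀ r ∈ S, r ∈ L) → S.inf id ∈ L := by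
    intro S
    induction S using Finset.induction_on with
    | empty => intro _; simpa using htop
    | insert _ _ ha ih =>
      intro h
      rw [Finset.inf_insert, Finset.inf_eq_inter]
      exact hLmeet _ (h _ (Finset.mem_insert_self _ _)) _
        (ih fun r hr => h r (Finset.mem_insert_of_mem hr))
  have hNpL : ∀ r ∈ Np, r ∈ L := fun r hr => ((hNp r).1 hr).1
  have hNqL : ∀ r ∈ Nq, r ∈ L := fun r hr => ((hNq r).1 hr).1
  have hmpL : meetF p Np ∈ L := by
    apply hinfL
    intro r hr
    rcases Finset.mem_insert.1 hr with h | h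
    · exact h ▸ hp
    · exact hNpL r h
  have hmqL : meetF q Nq ∈ L := by
    apply hinfL
    intro r hr
    rcases Finset.mem_insert.1 hr with h | h
    · exact h ▸ hq
    · exact hNqL r h
  have hmeet_le : ∀ (b : Finset (Fin n)) (S : Finset (Finset (Fin n))) (r : Finset (Fin n)),
      r ∈ insert b S → meetF b S ⊆ r := by
    intro b S r hr
    have h := Finset.inf_le (f := id) hr
    exact fun x hx => h hx
  have hmpp : meetF p Np ⊆ p := hmeet_le _ _ _ (Finset.mem_insert_self _ _)
  have hmqq : meetF q Nq ⊆ q := hmeet_le _ _ _ (Finset.mem_insert_self _ _)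
  have hmp_le : ∀ r ∈ Np, meetF p Np ⊆ r := fun r hr =>
    hmeet_le _ _ _ (Finset.mem_insert_of_mem hr)
  have hmq_le : ∀ r ∈ Nq, meetF q Nq ⊆ r := fun r hr =>
    hmeet_le _ _ _ (Finset.mem_insert_of_mem hr)
  set mp := meetF p Np with hmpdef
  -- the map f
  set f : Finset (Fin k) → Finset (Fin n) := fun S => (e.symm S).val with hfdef
  have hfL : ∀ S, f S ∈ L := fun S => (e.symm S).2.1
  have hf1 : ∀ S, mp ⊆ f S := fun S => (e.symm S).2.2.1
  have hf2 : ∀ S, f S ⊆ p := fun S => (e.symm S).2.2.2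
  have hfmono : ∀ {S T : Finset (Fin k)}, f S ⊆ f T ↔ S ⊆ T := by
    intro S T
    constructor
    · intro h
      have : e.symm S ≤ e.symm T := h
      exact e.symm.le_iff_le.1 this
    · intro h
      exact e.symm.le_iff_le.2 h
  have finj : Function.Injective f := by
    intro S T h
    exact subset_antisymm (hfmono.1 (by rw [h])) (hfmono.1 (by rw [h]))
  have hfss : ∀ {S T : Finset (Fin k)}, f S ⊂ f T ↔ S ⊂ T := by
    intro S T
    rw [Finset.ssubset_iff_subset_ne, Finset.ssubset_iff_subset_ne, hfmono]
    simp only [ne_eq, finj.eq_iff]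
  have hsurjI : ∀ r, r ∈ L → mp ⊆ r → r ⊆ p → ∃ S, f S = r := by
    intro r h1 h2 h3
    exact ⟨e ⟨r, h1, h2, h3⟩, congrArg Subtype.val (e.symm_apply_apply _)⟩
  have hfbot : f ∅ = mp := by
    obtain ⟨S0, hS0⟩ := hsurjI mp hmpL subset_rfl hmpp
    exact subset_antisymm (hS0 ▸ hfmono.2 (Finset.empty_subset _)) (hf1 ∅)
  have hftop : f Finset.univ = p := by
    obtain ⟨S0, hS0⟩ := hsurjI p hp hmpp subset_rfl
    exact subset_antisymm (hf2 _) (hS0 ▸ hfmono.2 (Finset.subset_univ _))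
  have hfinter : ∀ S T, f (S ∩ T) = f S ∩ f T := by
    intro S T
    apply subset_antisymm
    · exact Finset.subset_inter (hfmono.2 Finset.inter_subset_left)
        (hfmono.2 Finset.inter_subset_right)
    · obtain ⟨U, hU⟩ := hsurjI (f S ∩ f T) (hLmeet _ (hfL S) _ (hfL T))
        (Finset.subset_inter (hf1 S) (hf1 T)) ((Finset.inter_subset_left).trans (hf2 S))
      rw [← hU]
      apply hfmono.2
      apply Finset.subset_inter
      · exact hfmono.1 (hU ▸ Finset.inter_subset_left)
      · exact hfmono.1 (hU ▸ Finset.inter_subset_right)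
  have hfunion : ∀ S T, f (S ∪ T) = f S ∪ f T := by
    intro S T
    apply subset_antisymm
    · obtain ⟨U, hU⟩ := hsurjI (f S ∪ f T) (hLjoin _ (hfL S) _ (hfL T))
        ((hf1 S).trans Finset.subset_union_left)
        (Finset.union_subset (hf2 S) (hf2 T))
      rw [← hU]
      apply hfmono.2
      apply Finset.union_subset
      · exact hfmono.1 (hU ▸ Finset.subset_union_left)
      · exact hfmono.1 (hU ▸ Finset.subset_union_right)
    · exact Finset.union_subset (hfmono.2 Finset.subset_union_left)
        (hfmono.2 Finset.subset_union_right)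
  -- blocks
  set d : Fin k → Finset (Fin n) := fun i => f {i} \ mp with hddef
  have hdpos : ∀ i, 1 ≤ (d i).card := by
    intro i
    rw [Nat.one_le_iff_ne_zero, ← Nat.pos_iff_ne_zero, Finset.card_pos]
    rw [Finset.sdiff_nonempty]
    intro h
    have : ({i} : Finset (Fin k)) ⊆ ∅ := hfmono.1 (hfbot ▸ h)
    simpa using this
  have hdcard : ∀ S : Finset (Fin k), (f S).card = mp.card + ∑ i ∈ S, (d i).card := by
    intro S
    induction S using Finset.induction_on with
    | empty => simp [hfbot]
    | @insert a S ha ih =>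
      have hsplit : f (insert a S) = d a ∪ f S := by
        have h1 : f (insert a S) = f {a} ∪ f S := by
          rw [← hfunion, Finset.insert_eq]
        have h2 : f {a} = mp ∪ d a := by
          rw [hddef]
          exact (Finset.union_sdiff_of_subset (hf1 _)).symm
        rw [h1, h2, Finset.union_assoc]
        exact Finset.union_eq_right.2 ((hf1 S).trans Finset.subset_union_right)
      have hdisj : Disjoint (d a) (f S) := by
        rw [Finset.disjoint_left]
        intro x hx hxS
        have hx1 : x ∈ f {a} := (Finset.sdiff_subset) hx
        have hx2 : x ∉ mp := (Finset.mem_sdiff.1 hx).2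
        have : x ∈ f ({a} ∩ S) := by rw [hfinter]; exact Finset.mem_inter.2 ⟨hx1, hxS⟩
        have hint : ({a} : Finset (Fin k)) ∩ S = ∅ := by
          simp [Finset.singleton_inter_of_notMem ha]
        rw [hint, hfbot] at this
        exact hx2 this
      rw [hsplit, Finset.card_union_of_disjoint hdisj, ih, Finset.sum_insert ha]
      ring
  -- cover characterization
  have hcov1 : ∀ (B : Finset (Fin k)) (i : Fin k), i ∈ B → CoversIn L (f (B.erase i)) (f B) := by
    intro B i hi
    refine ⟨hfL _, hfL _, hfss.2 (Finset.erase_ssubset hi), ?_⟩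
    intro r hrL h1 h2
    have hr1 : mp ⊆ r := (hf1 _).trans h1.subset
    have hr2 : r ⊆ p := h2.subset.trans (hf2 _)
    obtain ⟨U, hU⟩ := hsurjI r hrL hr1 hr2
    rw [← hU] at h1 h2
    have hU1 : B.erase i ⊂ U := hfss.1 h1
    have hU2 : U ⊂ B := hfss.1 h2
    have c1 := Finset.card_lt_card hU1
    have c2 := Finset.card_lt_card hU2
    rw [Finset.card_erase_of_mem hi] at c1
    have : 1 ≤ B.card := Finset.card_pos.2 ⟨i, hi⟩
    omega
  have hcov2 : ∀ (B : Finset (Fin k)) (r : Finset (Fin n)), mp ⊆ r →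
      CoversIn L r (f B) → ∃ i ∈ B, r = f (B.erase i) := by
    intro B r hmr hc
    obtain ⟨hrL, -, hrb, hnb⟩ := hc
    obtain ⟨U, hU⟩ := hsurjI r hrL hmr (hrb.subset.trans (hf2 _))
    rw [← hU] at hrb hnb ⊢
    have hUB : U ⊂ B := hfss.1 hrb
    obtain ⟨i, hiB, hiU⟩ := Finset.exists_of_ssubset hUB
    refine ⟨i, hiB, ?_⟩
    have hUe : U ⊆ B.erase i := fun x hx =>
      Finset.mem_erase.2 ⟨fun h => hiU (h ▸ hx), hUB.subset hx⟩
    rcases eq_or_lt_of_le (Finset.le_iff_subset.2 hUe) with h | h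
    · rw [h]
    · exfalso
      exact hnb (f (B.erase i)) (hfL _) (hfss.2 (Finset.lt_iff_ssubset.1 h))
        (hfss.2 (Finset.erase_ssubset hiB))
  -- key computation for an element b = f B of the interval with covered set Nb
  have key : ∀ (B : Finset (Fin k)) (Nb : Finset (Finset (Fin n))),
      (∀ r, r ∈ Nb ↔ CoversIn L r (f B)) → mp ⊆ meetF (f B) Nb →
      ((f B).card : ℤ) - Nb.card - (meetF (f B) Nb).card
        = ∑ i ∈ B, ((d i).card - 1 : ℤ) := by
    intro B Nb hNb hmb
    have hNbL : ∀ r ∈ Nb, r ∈ L := fun r hr => ((hNb r).1 hr).1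
    have hmb_le : ∀ r ∈ Nb, meetF (f B) Nb ⊆ r := fun r hr =>
      hmeet_le _ _ _ (Finset.mem_insert_of_mem hr)
    have hmbb : meetF (f B) Nb ⊆ f B := hmeet_le _ _ _ (Finset.mem_insert_self _ _)
    have hNbimg : Nb = B.image (fun i => f (B.erase i)) := by
      ext r
      rw [hNb r, Finset.mem_image]
      constructor
      · intro hc
        have hmr : mp ⊆ r := by
          have := hmb_le r ((hNb r).2 hc)
          exact hmb.trans this
        obtain ⟨i, hi, hri⟩ := hcov2 B r hmr hc
        exact ⟨i, hi, hri.symm⟩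
      · rintro ⟨i, hi, rfl⟩
        exact hcov1 B i hi
    have hNbcard : Nb.card = B.card := by
      rw [hNbimg]
      apply Finset.card_image_of_injOn
      intro i hi j hj hij
      by_contra hne
      have h2 : i ∈ B.erase j := Finset.mem_erase.2 ⟨hne, hi⟩
      rw [← finj hij] at h2
      exact (Finset.mem_erase.1 h2).1 rfl
    rcases Finset.eq_empty_or_nonempty B with rfl | hBne
    · have hNbe : Nb = ∅ := by rw [hNbimg]; simp
      have : meetF (f ∅) Nb = f ∅ := by
        rw [hNbe]
        unfold meetF
        simp
      rw [this, hNbe]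
      simp
    · -- meetF (f B) Nb = mp
      have hmbmp : meetF (f B) Nb = mp := by
        apply subset_antisymm _ hmb
        have hmL : meetF (f B) Nb ∈ L := by
          apply hinfL
          intro r hr
          rcases Finset.mem_insert.1 hr with h | h
          · exact h ▸ hfL B
          · exact hNbL r h
        obtain ⟨A, hA⟩ := hsurjI _ hmL hmb (hmbb.trans (hf2 B))
        rw [← hA, ← hfbot]
        apply hfmono.2
        intro j hj
        exfalso
        obtain ⟨i0, hi0⟩ := hBne
        have hAsub : ∀ i ∈ B, A ⊆ B.erase i := by
          intro i hi
          apply hfmono.1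
          rw [hA]
          apply hmb_le
          rw [hNbimg]
          exact Finset.mem_image.2 ⟨i, hi, rfl⟩
        have hjB : j ∈ B := Finset.mem_of_mem_erase (hAsub i0 hi0 hj)
        exact (Finset.mem_erase.1 (hAsub j hjB hj)).1 rfl
      rw [hmbmp, hNbcard, hdcard B]
      push_cast
      rw [Finset.sum_sub_distrib, Finset.sum_const, nsmul_eq_mul, mul_one]
      ring
  -- q is in the interval
  have hmpq : mp ⊆ q := (hsub₁.trans hmqq)
  obtain ⟨Bq, hBqdef⟩ := hsurjI q hq hmpq hsub₂
  have hqkey := key Bq Nq (by rw [hBqdef]; exact hNq) (by rw [hBqdef]; exact hsub₁)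
  have hpkey := key Finset.univ Np (by rw [hftop]; exact hNp) (by rw [hftop])
  rw [hBqdef] at hqkey
  rw [hftop] at hpkey
  rw [hqkey, hpkey]
  apply Finset.sum_le_sum_of_subset_of_nonneg (Finset.subset_univ Bq)
  intro i _ _
  have := hdpos i
  omega
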